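/- Let ν ∈ H⁺ with ν(ℳ) > 0, let σ : ℳ → [0,∞) be Borel, and let S be the multiplicative selective cost S(g) := 1 − exp(−∫_ℳ σ dg). Then there exists an equilibrium ρ ∈ H⁺ (i.e. ν(A) = ∫_A F_ρ dρ for every Borel A ⊆ ℳ) if and only if ∫_ℳ (1 − e^{−σ(m)})^{−1} ν(dm) < ∞ and ν(ℳ) ≤ e^{−1}. Moreover, when these two conditions hold, for every c > 0 with c·e^{−c} = ν(ℳ), the measure ρ defined by ρ(A) := ∫_A e^{c}·(1 − e^{−σ(m)})^{−1} ν(dm) is an equilibrium. -/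

import Mathlib

open MeasureTheory Set Filter
open scoped ENNReal NNReal

noncomputable section

namespace MSEW

/-- `LipLE dE f c` : the bounded-Lipschitz norm of `f`, namely
`sup_x |f x| + sup_{x ≠ y} |f x - f y| / dE x y`, is at most `c`;
phrased without suprema, relative to an abstract distance function `dE`. -/
def LipLE {E : Type*} (dE : E → E → ℝ) (f : E → ℝ) (c : ℝ) : Prop :=
  ∃ a b : ℝ, 0 ≤ a ∧ 0 ≤ b ∧ a + b ≤ c ∧ (∀ x, |f x| ≤ a) ∧
    ∀ x y, |f x - f y| ≤ b * dE x y

/-- Integral of `f : E → ℝ` against a finite integer-valued measure, represented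
as the multiset of its atoms (a genotype). -/
def gInt {E : Type*} (g : Multiset E) (f : E → ℝ) : ℝ := (g.map f).sum

/-- The mass `g(A)` that a genotype `g` assigns to a set `A`. -/
def gMass {E : Type*} (g : Multiset E) (A : Set E) : ℝ := gInt g (A.indicator 1)

/-- The σ-algebra on genotypes generated by the counting functionals
`g ↦ g(A)` for measurable `A`. -/
instance multisetMeasurableSpace {E : Type*} [MeasurableSpace E] :
    MeasurableSpace (Multiset E) :=
  MeasurableSpace.generateFrom
    { s | ∃ (A : Set E) (n : ℕ), MeasurableSet A ∧ s = { g : Multiset E | gMass g A = n } }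

/-- Wasserstein distance between two (finite) measures: the supremum of
differences of integrals of test functions of bounded-Lipschitz norm at most one. -/
def wasDist {E : Type*} [MeasurableSpace E] (dE : E → E → ℝ) (P Q : Measure E) : ℝ :=
  sSup { r | ∃ f : E → ℝ, LipLE dE f 1 ∧ r = |∫ x, f x ∂P - ∫ x, f x ∂Q| }

/-- Wasserstein norm of a finite signed measure, `sup { |∫ f dπ| : ‖f‖_Lip ≤ 1 }`. -/
def wasNorm {E : Type*} [MeasurableSpace E] (dE : E → E → ℝ) (π : SignedMeasure E) : ℝ :=
  wasDist dE π.toJordanDecomposition.posPart π.toJordanDecomposition.negPart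

/-- The Wasserstein metric on genotypes, `d(g,h) = ‖g - h‖_Was`. -/
def dG {M : Type*} [MetricSpace M] (g h : Multiset M) : ℝ :=
  sSup { r | ∃ f : M → ℝ, LipLE dist f 1 ∧ r = |gInt g f - gInt h f| }

/-- The measure on `E` associated with a genotype: the finite sum of Dirac masses. -/
def genMeasure {E : Type*} [MeasurableSpace E] (g : Multiset E) : Measure E :=
  (g.map fun x => Measure.dirac x).sum

/-- The intensity measure `μP` of a law `P` on genotypes: `μP(A) = ∫ g(A) dP(g)`. -/
def intensity {E : Type*} [MeasurableSpace E] (P : Measure (Multiset E)) : Measure E :=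
  P.bind genMeasure

/-- The law `Π_π` of a Poisson random measure with intensity `π`:
`Π_π[F] = e^{-π(univ)} ∑_k (1/k!) ∫ F(δ_{x₁}+⋯+δ_{x_k}) dπ^{⊗k}`. -/
def poissonLaw {M : Type*} [MeasurableSpace M] (π : Measure M) : Measure (Multiset M) :=
  ENNReal.ofReal (Real.exp (-(π Set.univ).toReal)) •
    Measure.sum fun k : ℕ =>
      ((Nat.factorial k : ℝ≥0∞))⁻¹ •
        Measure.map (fun x : Fin k → M => ∑ i, ({x i} : Multiset M))
          (Measure.pi fun _ : Fin k => π)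

/-- A selective cost with Lipschitz constant `K`: a Borel function
`S : 𝒢 → [0,∞)` with `S(0) = 0`, monotone under adding mutations, and
Lipschitz with constant `K` for the Wasserstein metric on genotypes. -/
structure IsSelectiveCost {M : Type*} [MetricSpace M] [MeasurableSpace M]
    (S : Multiset M → ℝ) (K : ℝ) : Prop where
  measurable : Measurable S
  nonneg : ∀ g, 0 ≤ S g
  map_zero : S 0 = 0
  mono : ∀ g h, S g ≤ S (g + h)
  lip : ∀ g h, |S g - S h| ≤ K * dG g h

/-- `F_π(x) = E[S(X^π + δ_x) - S(X^π)]`. -/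
def Fcost {M : Type*} [MeasurableSpace M] (S : Multiset M → ℝ) (π : Measure M) (x : M) : ℝ :=
  ∫ g, (S (g + {x}) - S g) ∂(poissonLaw π)

/-- The kernel `K_ρ(m,m') = E[S(X^ρ+δ_m+δ_{m'}) - S(X^ρ+δ_{m'}) - S(X^ρ+δ_m) + S(X^ρ)]`. -/
def Kker {M : Type*} [MeasurableSpace M] (S : Multiset M → ℝ) (ρ : Measure M)
    (m m' : M) : ℝ :=
  ∫ g, (S (g + {m} + {m'}) - S (g + {m'}) - S (g + {m}) + S g) ∂(poissonLaw ρ)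

/-- The operator `D`: `Dπ` is the measure with density `F_π` with respect to `π`. -/
def Dop {M : Type*} [MeasurableSpace M] (S : Multiset M → ℝ) (ρ : Measure M) : Measure M :=
  ρ.withDensity fun x => ENNReal.ofReal (Fcost S ρ x)

/-- Concavity of a selective cost. -/
def ConcaveCost {M : Type*} (S : Multiset M → ℝ) : Prop :=
  ∀ g h k : Multiset M, S (g + h + k) - S (g + h) ≤ S (g + k) - S g

/-- A solution of the mutation–selection dynamics
`ρ_t(A) = ρ₀(A) + t·ν(A) - ∫₀ᵗ (Dρ_s)(A) ds`: a `‖⋅‖_Was`-continuous curve of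
finite nonnegative measures satisfying the integral equation for `t ≥ 0`. -/
def IsSolution {M : Type*} [MetricSpace M] [MeasurableSpace M]
    (S : Multiset M → ℝ) (ν ρ₀ : Measure M) (ρ : ℝ → Measure M) : Prop :=
  (∀ t, IsFiniteMeasure (ρ t)) ∧ ρ 0 = ρ₀ ∧
  (∀ t, 0 ≤ t → ∀ ε > (0:ℝ), ∃ δ > (0:ℝ), ∀ s, 0 ≤ s → |s - t| < δ →
     wasDist dist (ρ s) (ρ t) < ε) ∧
  ∀ t, 0 ≤ t → ∀ A : Set M, MeasurableSet A →
    ((ρ t) A).toReal = (ρ₀ A).toReal + t * (ν A).toReal -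
      ∫ s in (0:ℝ)..t, ((Dop S (ρ s)) A).toReal

/-- The mutation operator `𝔐_n`: add an independent Poisson cloud of new
mutations with intensity `ν/n`. -/
def mutOp {M : Type*} [MeasurableSpace M] (ν : Measure M) (n : ℕ)
    (P : Measure (Multiset M)) : Measure (Multiset M) :=
  Measure.map (fun p : Multiset M × Multiset M => p.1 + p.2)
    (P.prod (poissonLaw (((n : ℝ≥0∞))⁻¹ • ν)))

/-- The selection operator `𝔖_n`: reweight by `e^{-S/n}` and renormalize. -/
def selOp {M : Type*} [MeasurableSpace M] (S : Multiset M → ℝ) (n : ℕ)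
    (P : Measure (Multiset M)) : Measure (Multiset M) :=
  (∫⁻ g, ENNReal.ofReal (Real.exp (-S g / (n : ℝ))) ∂P)⁻¹ •
    P.withDensity fun g => ENNReal.ofReal (Real.exp (-S g / (n : ℝ)))

/-- The complete Poissonization operator `𝔓P = Π_{μP}`. -/
def poisOp {M : Type*} [MeasurableSpace M] (P : Measure (Multiset M)) :
    Measure (Multiset M) :=
  poissonLaw (intensity P)

/-- Restriction `g_B` of a genotype to a set: `g_B(A) = g(A ∩ B)`. -/
def restrictMS {M : Type*} (g : Multiset M) (B : Set M) : Multiset M :=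
  @Multiset.filter M (· ∈ B) (Classical.decPred _) g

/-- The random segregating set determined by a jointly measurable indicator. -/
def segSet {Ω M : Type*} (χ : Ω × M → Bool) (ω : Ω) : Set M :=
  { x | χ (ω, x) = true }

/-- The recombination operator `ℛ`. -/
def recOp {M Ω : Type*} [MeasurableSpace M] [MeasurableSpace Ω]
    (Pr : Measure Ω) (R : Ω → Set M) (P : Measure (Multiset M)) : Measure (Multiset M) :=
  Measure.map (fun q : Ω × Multiset M × Multiset M =>
      restrictMS q.2.1 (R q.1) + restrictMS q.2.2 ((R q.1)ᶜ))
    (Pr.prod (P.prod P))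

/-- Symmetry of a recombination mechanism: the segregating set and its
complement are identically distributed as random sets. -/
def IsSymmetricMech {M Ω : Type*} [MeasurableSpace M] [MeasurableSpace Ω]
    (Pr : Measure Ω) (R : Ω → Set M) : Prop :=
  ∀ lam : Measure M, IsFiniteMeasure lam → ∀ (p : ℕ) (B : Fin p → Set M),
    (∀ i, MeasurableSet (B i)) →
    Measure.map (fun ω => fun i => (lam (B i ∩ R ω)).toReal) Pr =
    Measure.map (fun ω => fun i => (lam (B i ∩ (R ω)ᶜ)).toReal) Pr

/-- `(ℛ, λ)` is shattering with constant `α`: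
`λ(A)³ ≤ 2α·E[λ(A ∩ R)·λ(A ∩ Rᶜ)]` for every Borel `A`. -/
def IsShattering {M Ω : Type*} [MeasurableSpace M] [MeasurableSpace Ω]
    (Pr : Measure Ω) (R : Ω → Set M) (lam : Measure M) (α : ℝ) : Prop :=
  ∀ A : Set M, MeasurableSet A →
    (lam A).toReal ^ 3 ≤
      2 * α * ∫ ω, (lam (A ∩ R ω)).toReal * (lam (A ∩ (R ω)ᶜ)).toReal ∂Pr

variable {M : Type*} [MetricSpace M] [CompleteSpace M] [TopologicalSpace.SeparableSpace M]
  [MeasurableSpace M] [BorelSpace M]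

/-- The multiplicative selective cost `S(g) = 1 - exp(-∫ σ dg)`. -/
def multCost {M : Type*} (σc : M → ℝ) (g : Multiset M) : ℝ :=
  1 - Real.exp (-(gInt g σc))

set_option linter.unusedSectionVars false
section Aux

variable {E : Type*} [MeasurableSpace E]

lemma gInt_zero (f : E → ℝ) : gInt (0 : Multiset E) f = 0 := by simp [gInt]

lemma gInt_cons (a : E) (g : Multiset E) (f : E → ℝ) :
    gInt (a ::ₘ g) f = f a + gInt g f := by simp [gInt]

lemma gInt_add (g h : Multiset E) (f : E → ℝ) :
    gInt (g + h) f = gInt g f + gInt h f := by simp [gInt]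

lemma gInt_singleton (a : E) (f : E → ℝ) : gInt ({a} : Multiset E) f = f a := by simp [gInt]

lemma gInt_nonneg {g : Multiset E} {f : E → ℝ} (hf : ∀ x, 0 ≤ f x) : 0 ≤ gInt g f := by
  induction g using Multiset.induction_on with
  | empty => simp [gInt]
  | cons a g ih => rw [gInt_cons]; exact add_nonneg (hf a) ih

/-- number of atoms of `g` in `A` -/
def nMass (g : Multiset E) (A : Set E) : ℕ :=
  Multiset.card (@Multiset.filter E (· ∈ A) (Classical.decPred _) g)

lemma gMass_eq_nMass (g : Multiset E) (A : Set E) : gMass g A = (nMass g A : ℝ) := by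
  induction g using Multiset.induction_on with
  | empty => simp [gMass, gInt, nMass]
  | cons a g ih =>
    rw [gMass, gInt_cons, ← gMass, ih]
    simp only [nMass, Multiset.filter_cons]
    by_cases h : a ∈ A
    · simp [Set.indicator_of_mem h, h, add_comm]
    · simp [Set.indicator_of_notMem h, h]

lemma measurable_nMass {A : Set E} (hA : MeasurableSet A) :
    Measurable fun g : Multiset E => nMass g A := by
  apply measurable_to_countable'
  intro n
  have : (fun g : Multiset E => nMass g A) ⁻¹' {n} = { g : Multiset E | gMass g A = n } := by
    ext g
    simp only [Set.mem_preimage, Set.mem_singleton_iff, Set.mem_setOf_eq, gMass_eq_nMass]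
    constructor <;> intro h <;> exact_mod_cast h
  rw [this]
  exact MeasurableSpace.measurableSet_generateFrom ⟨A, n, hA, rfl⟩

lemma multiset_sum_map_iSup (g : Multiset E) (f : ℕ → E → ℝ≥0∞) (hf : Monotone f) :
    (g.map fun a => ⨆ n, f n a).sum = ⨆ n, (g.map (f n)).sum := by
  induction g using Multiset.induction_on with
  | empty => simp
  | cons a g ih =>
    simp only [Multiset.map_cons, Multiset.sum_cons, ih]
    rw [ENNReal.iSup_add_iSup_of_monotone (fun i j hij => hf hij a)
      (fun i j hij => Multiset.sum_map_le_sum_map _ _ fun x _ => hf hij x)]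

lemma measurable_msum (φ : E → ℝ≥0∞) (hφ : Measurable φ) :
    Measurable fun g : Multiset E => (g.map φ).sum := by
  refine Measurable.ennreal_induction
    (motive := fun φ => Measurable fun g : Multiset E => (g.map φ).sum) ?_ ?_ ?_ hφ
  case refine_1 =>
    intro c s hs
    have : (fun g : Multiset E => (g.map (Set.indicator s fun _ => c)).sum)
        = fun g => c * (nMass g s : ℝ≥0∞) := by
      funext g
      induction g using Multiset.induction_on with
      | empty => simp [nMass]
      | cons a g ih =>
        simp only [Multiset.map_cons, Multiset.sum_cons, ih, nMass, Multiset.filter_cons]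
        by_cases h : a ∈ s
        · simp [Set.indicator_of_mem h, h, nMass, mul_add, add_comm]
        · simp [Set.indicator_of_notMem h, h, nMass]
    rw [this]
    exact measurable_const.mul (measurable_from_top.comp (measurable_nMass hs))
  case refine_2 =>
    intro f g _ hf hg Pf Pg
    have : (fun x : Multiset E => (x.map (f + g)).sum)
        = fun x => (x.map f).sum + (x.map g).sum := by
      funext x
      simp only [Pi.add_apply]
      rw [← Multiset.sum_map_add]
    exact this ▸ Pf.add Pg
  case refine_3 =>
    intro f hf hmono Pf
    have : (fun g : Multiset E => (g.map fun x => ⨆ n, f n x).sum)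
        = fun g => ⨆ n, (g.map (f n)).sum := by
      funext g; exact multiset_sum_map_iSup g f hmono
    exact this ▸ Measurable.iSup Pf

end Aux
section Aux2
set_option linter.unusedSectionVars false

variable {E : Type*} [MeasurableSpace E]

lemma msum_ne_top (g : Multiset E) (σ : E → ℝ) :
    (g.map fun m => ENNReal.ofReal (σ m)).sum ≠ ⊤ := by
  induction g using Multiset.induction_on with
  | empty => simp
  | cons a g ih => simp [ENNReal.add_ne_top, ih]

lemma gInt_eq_toReal (g : Multiset E) (σ : E → ℝ) (hσ : ∀ m, 0 ≤ σ m) :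
    gInt g σ = ((g.map fun m => ENNReal.ofReal (σ m)).sum).toReal := by
  induction g using Multiset.induction_on with
  | empty => simp [gInt]
  | cons a g ih =>
    rw [gInt_cons, ih]
    simp only [Multiset.map_cons, Multiset.sum_cons]
    rw [ENNReal.toReal_add ENNReal.ofReal_ne_top (msum_ne_top g σ),
      ENNReal.toReal_ofReal (hσ a)]

lemma measurable_gInt (σ : E → ℝ) (hσm : Measurable σ) (hσ : ∀ m, 0 ≤ σ m) :
    Measurable fun g : Multiset E => gInt g σ := by
  have : (fun g : Multiset E => gInt g σ)
      = fun g => ((g.map fun m => ENNReal.ofReal (σ m)).sum).toReal := by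
    funext g; exact gInt_eq_toReal g σ hσ
  rw [this]
  exact (measurable_msum _ hσm.ennreal_ofReal).ennreal_toReal

lemma multCost_diff (σ : E → ℝ) (g : Multiset E) (x : E) :
    multCost σ (g + {x}) - multCost σ g
      = (1 - Real.exp (-σ x)) * Real.exp (-(gInt g σ)) := by
  simp only [multCost, gInt_add, gInt_singleton, neg_add, Real.exp_add]
  ring

end Aux2
section Aux3
set_option linter.unusedSectionVars false

variable {E : Type*} [MeasurableSpace E]

lemma gInt_finsetSum {ι : Type*} (s : Finset ι) (h : ι → Multiset E) (f : E → ℝ) :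
    gInt (∑ i ∈ s, h i) f = ∑ i ∈ s, gInt (h i) f := by
  classical
  induction s using Finset.induction_on with
  | empty => simp [gInt]
  | insert a s hnot ih => rw [Finset.sum_insert hnot, gInt_add, ih,
      Finset.sum_insert hnot]

lemma measurable_sumSingleton {k : ℕ} :
    Measurable (fun x : Fin k → E => ∑ i, ({x i} : Multiset E)) := by
  apply measurable_generateFrom
  rintro s ⟨A, n, hA, rfl⟩
  have key : (fun x : Fin k → E => ∑ i, ({x i} : Multiset E)) ⁻¹'
      { g : Multiset E | gMass g A = n }
      = (fun x : Fin k → E => ∑ i, A.indicator (1 : E → ℝ) (x i)) ⁻¹' {(n : ℝ)} := by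
    ext x
    simp only [Set.mem_preimage, Set.mem_setOf_eq, Set.mem_singleton_iff, gMass,
      gInt_finsetSum]
    simp [gInt_singleton]
  rw [key]
  have hm : Measurable (fun x : Fin k → E => ∑ i, A.indicator (1 : E → ℝ) (x i)) :=
    Finset.measurable_sum _ fun i _ =>
      ((measurable_one.indicator hA)).comp (measurable_pi_apply i)
  exact hm (measurableSet_singleton _)

lemma lintegral_pi_prod (k : ℕ) (π : Measure E) [IsFiniteMeasure π]
    (φ : E → ℝ≥0∞) (hφ : Measurable φ) :
    ∫⁻ x : Fin k → E, ∏ i, φ (x i) ∂(Measure.pi fun _ => π)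
      = (∫⁻ m, φ m ∂π) ^ k := by
  induction k with
  | zero =>
    rw [show (fun x : Fin 0 → E => ∏ i, φ (x i)) = fun _ => 1 by funext x; simp]
    rw [lintegral_one, Measure.pi_univ]
    simp
  | succ k ih =>
    have hmp := measurePreserving_piFinSuccAbove (fun _ : Fin (k + 1) => π) 0
    have hF : Measurable (fun p : E × (Fin k → E) => φ p.1 * ∏ i, φ (p.2 i)) :=
      (hφ.comp measurable_fst).mul
        ((Finset.measurable_prod _ fun i _ => hφ.comp (measurable_pi_apply i)).comp
          measurable_snd)
    calc ∫⁻ x : Fin (k+1) → E, ∏ i, φ (x i) ∂(Measure.pi fun _ => π)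
        = ∫⁻ x : Fin (k+1) → E,
            (fun p : E × (Fin k → E) => φ p.1 * ∏ i, φ (p.2 i))
              ((MeasurableEquiv.piFinSuccAbove (fun _ => E) 0) x)
            ∂(Measure.pi fun _ => π) := by
          apply lintegral_congr; intro x
          simp only [MeasurableEquiv.piFinSuccAbove_apply]
          rw [Fin.prod_univ_succ]
          simp [Fin.succAbove_zero, Fin.tail]
      _ = ∫⁻ p, φ p.1 * ∏ i, φ (p.2 i) ∂(π.prod (Measure.pi fun _ : Fin k => π)) :=
          hmp.lintegral_comp hF
      _ = (∫⁻ m, φ m ∂π) * ∫⁻ x : Fin k → E, ∏ i, φ (x i) ∂(Measure.pi fun _ => π) :=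
          lintegral_prod_mul hφ.aemeasurable
            (Finset.measurable_prod _ fun i _ => hφ.comp (measurable_pi_apply i)).aemeasurable
      _ = (∫⁻ m, φ m ∂π) ^ (k + 1) := by rw [ih]; ring

end Aux3
section Aux4
set_option linter.unusedSectionVars false

variable {E : Type*} [MeasurableSpace E]

/-- `∫ (1 - e^{-σ}) dπ` as a lower integral. -/
def wInt (σ : E → ℝ) (π : Measure E) : ℝ≥0∞ :=
  ∫⁻ m, ENNReal.ofReal (1 - Real.exp (-σ m)) ∂π

lemma wInt_le (σ : E → ℝ) (hσ : ∀ m, 0 ≤ σ m) (π : Measure E) :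
    wInt σ π ≤ π Set.univ := by
  have : wInt σ π ≤ ∫⁻ _, 1 ∂π := by
    apply lintegral_mono; intro m
    refine ENNReal.ofReal_le_one.2 ?_
    have := Real.exp_pos (-σ m); linarith
  simpa using this

lemma expInt_add_wInt (σ : E → ℝ) (hσm : Measurable σ) (hσ : ∀ m, 0 ≤ σ m) (π : Measure E) :
    (∫⁻ m, ENNReal.ofReal (Real.exp (-σ m)) ∂π) + wInt σ π = π Set.univ := by
  rw [wInt, ← lintegral_add_left (f := fun m => ENNReal.ofReal (Real.exp (-σ m))) (hσm.neg.exp.ennreal_ofReal)]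
  have : ∀ m, ENNReal.ofReal (Real.exp (-σ m)) + ENNReal.ofReal (1 - Real.exp (-σ m)) = 1 := by
    intro m
    rw [← ENNReal.ofReal_add (Real.exp_pos _).le
      (by have := Real.exp_le_one_iff.2 (neg_nonpos.2 (hσ m)); linarith)]
    simp
  simp only [this]
  simp

lemma poisson_exp (σ : E → ℝ) (hσm : Measurable σ) (hσ : ∀ m, 0 ≤ σ m)
    (π : Measure E) [IsFiniteMeasure π] :
    ∫⁻ g, ENNReal.ofReal (Real.exp (-(gInt g σ))) ∂(poissonLaw π)
      = ENNReal.ofReal (Real.exp (-(wInt σ π).toReal)) := by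
  set Ee : ℝ≥0∞ := ∫⁻ m, ENNReal.ofReal (Real.exp (-σ m)) ∂π with hEe
  have hsum := expInt_add_wInt σ hσm hσ π
  rw [← hEe] at hsum
  have hWle := wInt_le σ hσ π
  have hWne : wInt σ π ≠ ⊤ := (lt_of_le_of_lt hWle (measure_lt_top π _)).ne
  have hEne : Ee ≠ ⊤ := by
    intro h
    rw [h] at hsum
    rw [top_add] at hsum
    exact (measure_lt_top π Set.univ).ne hsum.symm
  have hF : Measurable fun g : Multiset E => ENNReal.ofReal (Real.exp (-(gInt g σ))) :=
    ((measurable_gInt σ hσm hσ).neg.exp).ennreal_ofReal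
  rw [poissonLaw, lintegral_smul_measure, lintegral_sum_measure]
  have hterm : ∀ k : ℕ,
      ∫⁻ g, ENNReal.ofReal (Real.exp (-(gInt g σ)))
        ∂(((Nat.factorial k : ℝ≥0∞))⁻¹ •
          Measure.map (fun x : Fin k → E => ∑ i, ({x i} : Multiset E))
            (Measure.pi fun _ : Fin k => π))
      = ((Nat.factorial k : ℝ≥0∞))⁻¹ * Ee ^ k := by
    intro k
    rw [lintegral_smul_measure, lintegral_map hF measurable_sumSingleton]
    congr 1
    have : ∀ x : Fin k → E,
        ENNReal.ofReal (Real.exp (-(gInt (∑ i, ({x i} : Multiset E)) σ)))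
          = ∏ i, ENNReal.ofReal (Real.exp (-σ (x i))) := by
      intro x
      rw [gInt_finsetSum]
      simp only [gInt_singleton, ← Finset.sum_neg_distrib, Real.exp_sum]
      exact ENNReal.ofReal_prod_of_nonneg fun i _ => (Real.exp_pos _).le
    simp only [this]
    exact lintegral_pi_prod k π _ hσm.neg.exp.ennreal_ofReal
  simp only [hterm]
  set e := Ee.toReal with he
  have h0e : 0 ≤ e := ENNReal.toReal_nonneg
  have hEeq : Ee = ENNReal.ofReal e := (ENNReal.ofReal_toReal hEne).symm
  have hterm2 : ∀ k : ℕ, ((Nat.factorial k : ℝ≥0∞))⁻¹ * Ee ^ k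
      = ENNReal.ofReal (e ^ k / (Nat.factorial k : ℝ)) := by
    intro k
    rw [hEeq, ← ENNReal.ofReal_pow h0e,
      show ((Nat.factorial k : ℝ≥0∞)) = ENNReal.ofReal ((Nat.factorial k : ℝ)) by
        exact_mod_cast (ENNReal.ofReal_natCast _).symm,
      ← ENNReal.ofReal_inv_of_pos (by positivity),
      ← ENNReal.ofReal_mul (by positivity)]
    congr 1
    field_simp
  simp only [hterm2]
  rw [← ENNReal.ofReal_tsum_of_nonneg (fun k => by positivity)
    (Real.summable_pow_div_factorial e)]
  rw [smul_eq_mul, ← ENNReal.ofReal_mul (Real.exp_pos _).le]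
  congr 1
  have hexp : (∑' k : ℕ, e ^ k / (Nat.factorial k : ℝ)) = Real.exp e := by
    rw [Real.exp_eq_exp_ℝ, NormedSpace.exp_eq_tsum_div]
  rw [hexp, ← Real.exp_add]
  congr 1
  have : Ee.toReal + (wInt σ π).toReal = (π Set.univ).toReal := by
    rw [← ENNReal.toReal_add hEne hWne, hsum]
  linarith

end Aux4
section Aux5
set_option linter.unusedSectionVars false

variable {E : Type*} [MeasurableSpace E]

lemma Fcost_eq (σ : E → ℝ) (hσm : Measurable σ) (hσ : ∀ m, 0 ≤ σ m)
    (π : Measure E) [IsFiniteMeasure π] (x : E) :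
    Fcost (multCost σ) π x
      = (1 - Real.exp (-σ x)) * Real.exp (-(wInt σ π).toReal) := by
  have h1x : 0 ≤ 1 - Real.exp (-σ x) := by
    have := Real.exp_le_one_iff.2 (neg_nonpos.2 (hσ x)); linarith
  have hint : (fun g : Multiset E => multCost σ (g + {x}) - multCost σ g)
      = fun g => (1 - Real.exp (-σ x)) * Real.exp (-(gInt g σ)) := by
    funext g; exact multCost_diff σ g x
  rw [Fcost, hint]
  have hmeas : Measurable fun g : Multiset E =>
      (1 - Real.exp (-σ x)) * Real.exp (-(gInt g σ)) :=
    measurable_const.mul (measurable_gInt σ hσm hσ).neg.exp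
  rw [integral_eq_lintegral_of_nonneg_ae
    (Filter.Eventually.of_forall fun g => mul_nonneg h1x (Real.exp_pos _).le)
    hmeas.aestronglyMeasurable]
  have : ∀ g : Multiset E,
      ENNReal.ofReal ((1 - Real.exp (-σ x)) * Real.exp (-(gInt g σ)))
        = ENNReal.ofReal (1 - Real.exp (-σ x))
          * ENNReal.ofReal (Real.exp (-(gInt g σ))) :=
    fun g => ENNReal.ofReal_mul h1x
  simp only [this]
  rw [lintegral_const_mul _ (f := fun g => ENNReal.ofReal (Real.exp (-(gInt g σ)))) ((measurable_gInt σ hσm hσ).neg.exp).ennreal_ofReal,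
    poisson_exp σ hσm hσ π, ← ENNReal.ofReal_mul h1x,
    ENNReal.toReal_ofReal (mul_nonneg h1x (Real.exp_pos _).le)]

lemma Dop_apply (σ : E → ℝ) (hσm : Measurable σ) (hσ : ∀ m, 0 ≤ σ m)
    (ρ : Measure E) [IsFiniteMeasure ρ] {A : Set E} (hA : MeasurableSet A) :
    Dop (multCost σ) ρ A
      = ENNReal.ofReal (Real.exp (-(wInt σ ρ).toReal))
        * ∫⁻ m in A, ENNReal.ofReal (1 - Real.exp (-σ m)) ∂ρ := by
  rw [Dop, withDensity_apply _ hA]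
  have : ∀ m : E, ENNReal.ofReal (Fcost (multCost σ) ρ m)
      = ENNReal.ofReal (Real.exp (-(wInt σ ρ).toReal))
        * ENNReal.ofReal (1 - Real.exp (-σ m)) := by
    intro m
    rw [Fcost_eq σ hσm hσ ρ m, mul_comm,
      ENNReal.ofReal_mul (Real.exp_pos _).le]
  simp only [this]
  rw [lintegral_const_mul' _ _ ENNReal.ofReal_ne_top]

end Aux5
section Aux6
set_option linter.unusedSectionVars false

variable {E : Type*} [MeasurableSpace E]

lemma construct (σ : E → ℝ) (hσm : Measurable σ) (hσ : ∀ m, 0 ≤ σ m)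
    (ν : Measure E) [IsFiniteMeasure ν]
    (h1 : ∫⁻ m, (ENNReal.ofReal (1 - Real.exp (-σ m)))⁻¹ ∂ν < ⊤)
    (c : ℝ) (hcpos : 0 < c) (hc : c * Real.exp (-c) = (ν Set.univ).toReal)
    {A : Set E} (hA : MeasurableSet A) :
    ν A = Dop (multCost σ)
      (ν.withDensity fun m =>
        ENNReal.ofReal (Real.exp c) * (ENNReal.ofReal (1 - Real.exp (-σ m)))⁻¹) A := by
  set w : E → ℝ≥0∞ := fun m => ENNReal.ofReal (1 - Real.exp (-σ m)) with hw
  have hwm : Measurable w := (measurable_const.sub hσm.neg.exp).ennreal_ofReal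
  set f : E → ℝ≥0∞ := fun m => ENNReal.ofReal (Real.exp c) * (w m)⁻¹ with hf
  have hfm : Measurable f := measurable_const.mul hwm.inv
  set ρ : Measure E := ν.withDensity f with hρ
  have hae : ∀ᵐ m ∂ν, f m * w m = ENNReal.ofReal (Real.exp c) := by
    have h' : ∀ᵐ m ∂ν, (w m)⁻¹ < ⊤ := ae_lt_top hwm.inv h1.ne
    filter_upwards [h'] with m hm
    have hw0 : w m ≠ 0 := by
      intro h0
      rw [h0] at hm; simp at hm
    rw [hf, mul_assoc, ENNReal.inv_mul_cancel hw0 ENNReal.ofReal_ne_top, mul_one]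
  have hρfin : IsFiniteMeasure ρ := by
    constructor
    rw [hρ, withDensity_apply _ MeasurableSet.univ, Measure.restrict_univ, hf,
      lintegral_const_mul' _ _ ENNReal.ofReal_ne_top]
    exact ENNReal.mul_lt_top ENNReal.ofReal_lt_top h1
  have hIρ : wInt σ ρ = ENNReal.ofReal (Real.exp c) * ν Set.univ := by
    rw [wInt, hρ, lintegral_withDensity_eq_lintegral_mul ν hfm hwm]
    simp only [Pi.mul_apply]
    rw [lintegral_congr_ae hae, lintegral_const]
  have hIt : (wInt σ ρ).toReal = c := by
    rw [hIρ, ENNReal.toReal_mul, ENNReal.toReal_ofReal (Real.exp_pos _).le, ← hc]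
    rw [← mul_assoc, mul_comm (Real.exp c) c, mul_assoc, ← Real.exp_add]
    simp
  rw [Dop_apply σ hσm hσ ρ hA, hIt]
  have hres : ∫⁻ m in A, w m ∂ρ = ENNReal.ofReal (Real.exp c) * ν A := by
    rw [hρ, restrict_withDensity hA, lintegral_withDensity_eq_lintegral_mul _ hfm hwm]
    simp only [Pi.mul_apply]
    rw [lintegral_congr_ae (ae_restrict_of_ae hae), setLIntegral_const]
  rw [hres, ← mul_assoc, ← ENNReal.ofReal_mul (Real.exp_pos _).le, ← Real.exp_add]
  simp

end Aux6
section Aux7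
set_option linter.unusedSectionVars false

variable {E : Type*} [MeasurableSpace E]

lemma necessity (σ : E → ℝ) (hσm : Measurable σ) (hσ : ∀ m, 0 ≤ σ m)
    (ν ρ : Measure E) [IsFiniteMeasure ν] [IsFiniteMeasure ρ]
    (heq : ∀ A : Set E, MeasurableSet A → ν A = Dop (multCost σ) ρ A) :
    (∫⁻ m, (ENNReal.ofReal (1 - Real.exp (-σ m)))⁻¹ ∂ν < ⊤) ∧
      (ν Set.univ).toReal ≤ Real.exp (-1) := by
  set w : E → ℝ≥0∞ := fun m => ENNReal.ofReal (1 - Real.exp (-σ m)) with hw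
  have hwm : Measurable w := (measurable_const.sub hσm.neg.exp).ennreal_ofReal
  set t : ℝ := (wInt σ ρ).toReal with ht
  have hIne : wInt σ ρ ≠ ⊤ := (lt_of_le_of_lt (wInt_le σ hσ ρ) (measure_lt_top ρ _)).ne
  have hνeq : ν = ρ.withDensity fun m => ENNReal.ofReal (Real.exp (-t)) * w m := by
    ext A hA
    rw [heq A hA, Dop_apply σ hσm hσ ρ hA, withDensity_apply _ hA,
      lintegral_const_mul' _ _ ENNReal.ofReal_ne_top]
  constructor
  · rw [hνeq, lintegral_withDensity_eq_lintegral_mul _ (f := fun m => ENNReal.ofReal (Real.exp (-t)) * w m)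
      (g := fun m => (w m)⁻¹) (measurable_const.mul hwm) hwm.inv]
    have hb : ∀ m : E,
        ((fun m => ENNReal.ofReal (Real.exp (-t)) * w m) * fun m => (w m)⁻¹) m
          ≤ ENNReal.ofReal (Real.exp (-t)) := by
      intro m
      simp only [Pi.mul_apply]
      rw [mul_assoc]
      calc ENNReal.ofReal (Real.exp (-t)) * (w m * (w m)⁻¹)
          ≤ ENNReal.ofReal (Real.exp (-t)) * 1 :=
            mul_le_mul_right (ENNReal.mul_inv_le_one _) _
        _ = ENNReal.ofReal (Real.exp (-t)) := mul_one _
    calc ∫⁻ m, ((fun m => ENNReal.ofReal (Real.exp (-t)) * w m) * fun m => (w m)⁻¹) m ∂ρ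
        ≤ ∫⁻ _, ENNReal.ofReal (Real.exp (-t)) ∂ρ := lintegral_mono hb
      _ = ENNReal.ofReal (Real.exp (-t)) * ρ Set.univ := lintegral_const _
      _ < ⊤ := ENNReal.mul_lt_top ENNReal.ofReal_lt_top (measure_lt_top ρ _)
  · have hν : ν Set.univ = ENNReal.ofReal (Real.exp (-t)) * wInt σ ρ := by
      rw [heq Set.univ MeasurableSet.univ, Dop_apply σ hσm hσ ρ MeasurableSet.univ,
        Measure.restrict_univ]
      rfl
    rw [hν, ENNReal.toReal_mul, ENNReal.toReal_ofReal (Real.exp_pos _).le, ← ht]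
    have h0t : 0 ≤ t := ENNReal.toReal_nonneg
    have hle : t ≤ Real.exp (t - 1) := by
      have := Real.add_one_le_exp (t - 1); linarith
    calc Real.exp (-t) * t ≤ Real.exp (-t) * Real.exp (t - 1) :=
          mul_le_mul_of_nonneg_left hle (Real.exp_pos _).le
      _ = Real.exp (-1) := by rw [← Real.exp_add]; ring_nf

end Aux7
theorem multiplicative_equilibria (ν : Measure M) [IsFiniteMeasure ν]
    (hν : 0 < (ν Set.univ).toReal)
    (σc : M → ℝ) (hσm : Measurable σc) (hσ0 : ∀ m, 0 ≤ σc m) :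
    ((∃ ρ : Measure M, IsFiniteMeasure ρ ∧
        ∀ A : Set M, MeasurableSet A → ν A = (Dop (multCost σc) ρ) A) ↔
      (∫⁻ m, (ENNReal.ofReal (1 - Real.exp (-σc m)))⁻¹ ∂ν < ⊤ ∧
        (ν Set.univ).toReal ≤ Real.exp (-1))) ∧
    ((∫⁻ m, (ENNReal.ofReal (1 - Real.exp (-σc m)))⁻¹ ∂ν < ⊤) →
      (ν Set.univ).toReal ≤ Real.exp (-1) →
      ∀ c : ℝ, 0 < c → c * Real.exp (-c) = (ν Set.univ).toReal →
        ∀ A : Set M, MeasurableSet A →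
          ν A = (Dop (multCost σc)
            (ν.withDensity fun m =>
              ENNReal.ofReal (Real.exp c) *
                (ENNReal.ofReal (1 - Real.exp (-σc m)))⁻¹)) A) := by
  constructor
  · constructor
    · rintro ⟨ρ, hρfin, heq⟩
      exact necessity σc hσm hσ0 ν ρ heq
    · rintro ⟨h1, h2⟩
      have hcont : ContinuousOn (fun t : ℝ => t * Real.exp (-t)) (Set.Icc 0 1) :=
        (continuous_id.mul (Real.continuous_exp.comp continuous_neg)).continuousOn
      have hmem : (ν Set.univ).toReal ∈
          Set.Icc ((fun t : ℝ => t * Real.exp (-t)) 0) ((fun t : ℝ => t * Real.exp (-t)) 1) := by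
        simp only [zero_mul, one_mul]
        exact ⟨hν.le, h2⟩
      obtain ⟨c, hcmem, hfc⟩ := intermediate_value_Icc zero_le_one hcont hmem
      have hcpos : 0 < c := by
        rcases hcmem.1.lt_or_eq with h | h
        · exact h
        · exfalso
          rw [← h] at hfc
          simp at hfc
          rw [← hfc] at hν
          exact lt_irrefl _ hν
      refine ⟨ν.withDensity fun m =>
        ENNReal.ofReal (Real.exp c) * (ENNReal.ofReal (1 - Real.exp (-σc m)))⁻¹, ?_, ?_⟩
      · constructor
        rw [withDensity_apply _ MeasurableSet.univ, Measure.restrict_univ,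
          lintegral_const_mul' _ _ ENNReal.ofReal_ne_top]
        exact ENNReal.mul_lt_top ENNReal.ofReal_lt_top h1
      · intro A hA
        exact construct σc hσm hσ0 ν h1 c hcpos hfc hA
  · intro h1 _h2 c hcpos hc A hA
    exact construct σc hσm hσ0 ν h1 c hcpos hc hA

end MSEW
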